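/- Assume K₂ > 0. If real numbers θ̃₁ ≤ θ̃₂ ≤ θ̃₃ have diameter D := θ̃₃ − θ̃₁ ∈ [0, π] and |θ̃₂ − (θ̃₃+θ̃₁)/2| ≤ D/2, then −(2K₂/3)·[sin(D − π/3) + cos(θ̃₂ − (θ̃₃+θ̃₁)/2)·sin(D/2 + π/3)] ≤ −(2K₂/15)·D. -/

import Mathlib

open Real

lemma key18 (x : ℝ) (hx0 : 0 ≤ x) (hxpi : x ≤ π) :
    x/5 ≤ 3/4 * sin x + Real.sqrt 3/4 * (1 - cos x) := by
  have hs3 : Real.sqrt 3 ^ 2 = 3 := Real.sq_sqrt (by norm_num)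
  have hs3nn : 0 ≤ Real.sqrt 3 := Real.sqrt_nonneg 3
  have hs3lb : 1.7 ≤ Real.sqrt 3 := by nlinarith
  have hpi1 : 3.141592 < π := pi_gt_d6
  have hpi2 : π < 3.1416 := pi_lt_d4
  rcases le_or_gt x (π/2) with h | h
  · have h1 : 2/π * x ≤ sin x := Real.mul_le_sin hx0 h
    have h1' : 2 * x ≤ π * sin x := by
      rw [div_mul_eq_mul_div, div_le_iff₀ pi_pos] at h1
      linarith [h1]
    have hsx : 0 ≤ sin x := Real.sin_nonneg_of_nonneg_of_le_pi hx0 hxpi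
    have hcx : cos x ≤ 1 := Real.cos_le_one x
    nlinarith [mul_nonneg hs3nn (sub_nonneg.mpr hcx)]
  · set y := π - x with hy
    have hy0 : 0 ≤ y := by simp [hy]; linarith
    have hy2 : y ≤ π/2 := by simp [hy]; linarith
    have hsin : sin x = sin y := by rw [hy, Real.sin_pi_sub]
    have hcos : cos x = - cos y := by rw [hy, Real.cos_pi_sub, neg_neg]
    have h1 : 2/π * y ≤ sin y := Real.mul_le_sin hy0 hy2
    have h1' : 2 * y ≤ π * sin y := by
      rw [div_mul_eq_mul_div, div_le_iff₀ pi_pos] at h1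
      linarith [h1]
    have h2 : 1 - y^2/2 ≤ cos y := Real.one_sub_sq_div_two_le_cos
    have hsy : 0 ≤ sin y := Real.sin_nonneg_of_nonneg_of_le_pi hy0 (by linarith [pi_pos])
    rw [hsin, hcos]
    nlinarith [mul_nonneg hy0 (sub_nonneg.mpr hy2), sq_nonneg y,
      mul_nonneg (mul_nonneg hy0 hy0) hy0]

lemma ident18 (D : ℝ) :
    sin (D - π/3) + cos (D/2) * sin (D/2 + π/3)
      = 3/4 * sin D + Real.sqrt 3/4 * (1 - cos D) := by
  have hs : sin D = 2 * sin (D/2) * cos (D/2) := by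
    rw [← Real.sin_two_mul]; ring_nf
  have hc : cos D = 2 * cos (D/2)^2 - 1 := by
    rw [← Real.cos_two_mul]; ring_nf
  rw [Real.sin_sub, Real.sin_add, Real.cos_pi_div_three, Real.sin_pi_div_three, hs, hc]
  ring

theorem stmt18 (K₂ : ℝ) (hK₂ : 0 < K₂)
    (θ₁ θ₂ θ₃ : ℝ) (h₁₂ : θ₁ ≤ θ₂) (h₂₃ : θ₂ ≤ θ₃)
    (D : ℝ) (hD : D = θ₃ - θ₁) (hDmem : D ∈ Set.Icc 0 π)
    (hmid : |θ₂ - (θ₃ + θ₁)/2| ≤ D/2) :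
    -(2*K₂/3) * (sin (D - π/3) + cos (θ₂ - (θ₃ + θ₁)/2) * sin (D/2 + π/3))
      ≤ -(2*K₂/15) * D := by
  obtain ⟨hD0, hDpi⟩ := hDmem
  have hpi := pi_pos
  have hsin2 : 0 ≤ sin (D/2 + π/3) :=
    Real.sin_nonneg_of_nonneg_of_le_pi (by linarith) (by linarith)
  have hcosm : cos (D/2) ≤ cos (θ₂ - (θ₃ + θ₁)/2) := by
    rw [← Real.cos_abs (θ₂ - (θ₃ + θ₁)/2)]
    exact Real.cos_le_cos_of_nonneg_of_le_pi (abs_nonneg _) (by linarith) hmid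
  have hkey := key18 D hD0 hDpi
  have hid := ident18 D
  have hA : D/5 ≤ sin (D - π/3) + cos (θ₂ - (θ₃ + θ₁)/2) * sin (D/2 + π/3) := by
    nlinarith [mul_le_mul_of_nonneg_right hcosm hsin2]
  nlinarith [mul_le_mul_of_nonneg_left hA hK₂.le]
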